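/- Let x₁, x₂ : [a,b] → ℂ be twice continuously differentiable. Then for t₀ ≤ t in [a,b], x₂'(t)(x₁(t) - x₁(t₀)) - x₁'(t)(x₂(t) - x₂(t₀)) = ∫₀^{t-t₀} ∫₀^{s} [x₂''(t₀+s) x₁'(t₀+η) - x₁''(t₀+s) x₂'(t₀+η)] dη ds. -/

import Mathlib

open intervalIntegral

/-- The double-integral representation (eq:eval:kappa) of the
stabilized double-layer kernel numerator: for twice continuously
differentiable `x₁, x₂ : [a,b] → ℂ` and `t₀ ≤ t` in `[a,b]`,
`x₂'(t)(x₁(t)-x₁(t₀)) - x₁'(t)(x₂(t)-x₂(t₀))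
  = ∫₀^{t-t₀} ∫₀^s [x₂''(t₀+s)x₁'(t₀+η) - x₁''(t₀+s)x₂'(t₀+η)] dη ds`. -/
theorem stmt11 (a b : ℝ) (x₁ x₂ x₁' x₂' x₁'' x₂'' : ℝ → ℂ)
    (hd₁ : ∀ t ∈ Set.Icc a b, HasDerivAt x₁ (x₁' t) t)
    (hd₂ : ∀ t ∈ Set.Icc a b, HasDerivAt x₂ (x₂' t) t)
    (hdd₁ : ∀ t ∈ Set.Icc a b, HasDerivAt x₁' (x₁'' t) t)
    (hdd₂ : ∀ t ∈ Set.Icc a b, HasDerivAt x₂' (x₂'' t) t)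
    (hc₁ : ContinuousOn x₁'' (Set.Icc a b))
    (hc₂ : ContinuousOn x₂'' (Set.Icc a b)) :
    ∀ t₀ ∈ Set.Icc a b, ∀ t ∈ Set.Icc a b, t₀ ≤ t →
      x₂' t * (x₁ t - x₁ t₀) - x₁' t * (x₂ t - x₂ t₀) =
        ∫ s in (0:ℝ)..(t - t₀), ∫ η in (0:ℝ)..s,
          (x₂'' (t₀ + s) * x₁' (t₀ + η) - x₁'' (t₀ + s) * x₂' (t₀ + η)) := by
  intro t₀ ht₀ t ht htt
  obtain ⟨ha₀, hb₀⟩ := ht₀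
  obtain ⟨ha, hb⟩ := ht
  have h0le : (0:ℝ) ≤ t - t₀ := by linarith
  have huIcc : Set.uIcc (0:ℝ) (t - t₀) = Set.Icc 0 (t - t₀) := Set.uIcc_of_le h0le
  have hsub : ∀ s ∈ Set.Icc (0:ℝ) (t - t₀), t₀ + s ∈ Set.Icc a b := by
    intro s hs
    exact ⟨by linarith [hs.1], by linarith [hs.2]⟩
  -- continuity of the first derivatives
  have hcx₁' : ContinuousOn x₁' (Set.Icc a b) := fun u hu =>
    (hdd₁ u hu).continuousAt.continuousWithinAt
  have hcx₂' : ContinuousOn x₂' (Set.Icc a b) := fun u hu =>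
    (hdd₂ u hu).continuousAt.continuousWithinAt
  have hcx₁ : ContinuousOn x₁ (Set.Icc a b) := fun u hu =>
    (hd₁ u hu).continuousAt.continuousWithinAt
  have hcx₂ : ContinuousOn x₂ (Set.Icc a b) := fun u hu =>
    (hd₂ u hu).continuousAt.continuousWithinAt
  have hcont_add : ∀ s ∈ Set.Icc (0:ℝ) (t - t₀),
      ∀ {g : ℝ → ℂ}, ContinuousOn g (Set.Icc a b) →
        ContinuousOn (fun η => g (t₀ + η)) (Set.Icc 0 s) := by
    intro s hs g hg
    apply hg.comp (continuous_const.add continuous_id).continuousOn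
    intro η hη
    exact hsub η ⟨hη.1, le_trans hη.2 hs.2⟩
  -- fundamental theorem of calculus on shifted intervals
  have key : ∀ (f f' : ℝ → ℂ), (∀ u ∈ Set.Icc a b, HasDerivAt f (f' u) u) →
      ContinuousOn f' (Set.Icc a b) → ∀ s ∈ Set.Icc (0:ℝ) (t - t₀),
      (∫ η in (0:ℝ)..s, f' (t₀ + η)) = f (t₀ + s) - f t₀ := by
    intro f f' hdf hcf s hs
    have := intervalIntegral.integral_eq_sub_of_hasDerivAt
      (f := fun η => f (t₀ + η)) (f' := fun η => f' (t₀ + η)) (a := (0:ℝ)) (b := s)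
      (fun η hη => by
        rw [Set.uIcc_of_le hs.1] at hη
        exact (hdf (t₀ + η) (hsub η ⟨hη.1, le_trans hη.2 hs.2⟩)).comp_const_add t₀ η)
      ((hcont_add s hs hcf).intervalIntegrable_of_Icc hs.1)
    simpa using this
  set G : ℝ → ℂ := fun s =>
    x₂'' (t₀ + s) * (x₁ (t₀ + s) - x₁ t₀) - x₁'' (t₀ + s) * (x₂ (t₀ + s) - x₂ t₀) with hG
  have inner_eq : ∀ s ∈ Set.uIcc (0:ℝ) (t - t₀),
      (∫ η in (0:ℝ)..s, (x₂'' (t₀ + s) * x₁' (t₀ + η) - x₁'' (t₀ + s) * x₂' (t₀ + η)))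
        = G s := by
    intro s hs
    rw [huIcc] at hs
    have hi₁ : IntervalIntegrable (fun η => x₁' (t₀ + η)) MeasureTheory.volume 0 s :=
      (hcont_add s hs hcx₁').intervalIntegrable_of_Icc hs.1
    have hi₂ : IntervalIntegrable (fun η => x₂' (t₀ + η)) MeasureTheory.volume 0 s :=
      (hcont_add s hs hcx₂').intervalIntegrable_of_Icc hs.1
    rw [intervalIntegral.integral_sub (hi₁.const_mul _) (hi₂.const_mul _),
      intervalIntegral.integral_const_mul, intervalIntegral.integral_const_mul,
      key x₁ x₁' hd₁ hcx₁' s hs, key x₂ x₂' hd₂ hcx₂' s hs]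
  rw [intervalIntegral.integral_congr inner_eq]
  set F : ℝ → ℂ := fun s =>
    x₂' (t₀ + s) * (x₁ (t₀ + s) - x₁ t₀) - x₁' (t₀ + s) * (x₂ (t₀ + s) - x₂ t₀) with hF
  have hderiv : ∀ s ∈ Set.uIcc (0:ℝ) (t - t₀), HasDerivAt F (G s) s := by
    intro s hs
    rw [huIcc] at hs
    have hmem := hsub s hs
    have h1 : HasDerivAt (fun u => x₁ (t₀ + u)) (x₁' (t₀ + s)) s :=
      (hd₁ _ hmem).comp_const_add t₀ s
    have h2 : HasDerivAt (fun u => x₂ (t₀ + u)) (x₂' (t₀ + s)) s :=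
      (hd₂ _ hmem).comp_const_add t₀ s
    have h1' : HasDerivAt (fun u => x₁' (t₀ + u)) (x₁'' (t₀ + s)) s :=
      (hdd₁ _ hmem).comp_const_add t₀ s
    have h2' : HasDerivAt (fun u => x₂' (t₀ + u)) (x₂'' (t₀ + s)) s :=
      (hdd₂ _ hmem).comp_const_add t₀ s
    have := ((h2'.mul (h1.sub_const (x₁ t₀)))).sub ((h1'.mul (h2.sub_const (x₂ t₀))))
    convert this using 1
    · rfl
    · funext u
      simp [hF]
    · simp [hG]
      ring
  have hGint : IntervalIntegrable G MeasureTheory.volume 0 (t - t₀) := by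
    apply ContinuousOn.intervalIntegrable
    rw [huIcc]
    have hmap : Set.MapsTo (fun s => t₀ + s) (Set.Icc (0:ℝ) (t - t₀)) (Set.Icc a b) := hsub
    have hca : ContinuousOn (fun s => t₀ + s) (Set.Icc (0:ℝ) (t - t₀)) :=
      (continuous_const.add continuous_id).continuousOn
    exact ((hc₂.comp hca hmap).mul ((hcx₁.comp hca hmap).sub continuousOn_const)).sub
      ((hc₁.comp hca hmap).mul ((hcx₂.comp hca hmap).sub continuousOn_const))
  rw [intervalIntegral.integral_eq_sub_of_hasDerivAt hderiv hGint]
  simp [hF]
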